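/- Let α ≥ 0, T > 0 and w ∈ C⁰(Ω̄×[0,T]) nonnegative, c₀, p₀ ∈ C⁰(Ω̄; [0,∞)). For each x ∈ Ω̄, the ODE system cₜ = −pc, pₜ = w e^{αc} c − p with initial values (c₀(x), p₀(x)) has a unique solution (c(x,·), p(x,·)) defined on all of [0,T], and it satisfies 0 ≤ c(x,t) ≤ c₀(x) and 0 ≤ p(x,t) ≤ max{p₀(x), c₀(x)e^{αc₀(x)}·max_{s∈[0,T]}w(x,s)} for all t ∈ [0,T]. -/

import Mathlib

open Set Real
open scoped NNReal


private def myTr (A : ℝ) (s : ℝ) : ℝ := max 0 (min s A)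

private lemma myTr_nonneg (A s : ℝ) : 0 ≤ myTr A s := le_max_left _ _
private lemma myTr_le (A s : ℝ) (hA : 0 ≤ A) : myTr A s ≤ A :=
  max_le hA (min_le_right _ _)
private lemma myTr_eq (A s : ℝ) (h1 : 0 ≤ s) (h2 : s ≤ A) : myTr A s = s := by
  simp [myTr, min_eq_left h2, max_eq_right h1]
private lemma myTr_eq_zero (A s : ℝ) (h1 : s ≤ 0) (h2 : 0 ≤ A) : myTr A s = 0 := by
  simp [myTr, min_eq_left (h1.trans h2), max_eq_left h1]
private lemma myTr_eq_top (A s : ℝ) (h1 : A ≤ s) (h2 : 0 ≤ A) : myTr A s = A := by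
  simp [myTr, min_eq_right h1, max_eq_right h2]

private lemma my_exists_lipOn {f : ℝ × (ℝ × ℝ) → ℝ × ℝ} (hf : ContDiff ℝ 1 f)
    {S : Set (ℝ × (ℝ × ℝ))} (hconv : Convex ℝ S) (hcomp : IsCompact S) :
    ∃ K : ℝ≥0, LipschitzOnWith K f S := by
  obtain ⟨C, hC⟩ := hcomp.exists_bound_of_continuousOn
    ((hf.continuous_fderiv one_ne_zero).continuousOn)
  refine ⟨C.toNNReal, hconv.lipschitzOnWith_of_nnnorm_hasFDerivWithin_le
    (fun z hz => ((hf.differentiable one_ne_zero) z).hasFDerivAt.hasFDerivWithinAt) ?_⟩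
  intro z hz
  have := Real.toNNReal_mono (hC z hz)
  simpa [Real.toNNReal_coe, norm_toNNReal] using this

private lemma my_contDiff_G (α : ℝ) : ContDiff ℝ 1 (fun z : ℝ × (ℝ × ℝ) =>
    ((-(z.2.2 * z.2.1), z.1 * Real.exp (α * z.2.1) * z.2.1 - z.2.2) : ℝ × ℝ)) := by
  fun_prop

private lemma my_slice {K : ℝ≥0} {f : ℝ × (ℝ × ℝ) → ℝ × ℝ} {A : Set ℝ} {Y : Set (ℝ × ℝ)}
    (h : LipschitzOnWith K f (A ×ˢ Y)) {ω : ℝ} (hω : ω ∈ A) :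
    LipschitzOnWith K (fun y => f (ω, y)) Y := by
  intro y hy y' hy'
  have h2 := h (Set.mk_mem_prod hω hy) (Set.mk_mem_prod hω hy')
  have : edist ((ω, y) : ℝ × (ℝ × ℝ)) (ω, y') = edist y y' := by
    simp [Prod.edist_eq]
  rwa [this] at h2

private lemma my_clamp_lip (A : ℝ) : LipschitzWith 1 (myTr A) :=
  (LipschitzWith.id.min_const A).const_max 0

private lemma my_fst_deriv {f : ℝ → ℝ × ℝ} {d : ℝ × ℝ} {t : ℝ} (h : HasDerivAt f d t) :
    HasDerivAt (fun s => (f s).1) d.1 t := by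
  have := (ContinuousLinearMap.fst ℝ ℝ ℝ).hasFDerivAt.comp_hasDerivAt t h
  exact this

private lemma my_snd_deriv {f : ℝ → ℝ × ℝ} {d : ℝ × ℝ} {t : ℝ} (h : HasDerivAt f d t) :
    HasDerivAt (fun s => (f s).2) d.2 t := by
  have := (ContinuousLinearMap.snd ℝ ℝ ℝ).hasFDerivAt.comp_hasDerivAt t h
  exact this

private lemma my_barrier {T B : ℝ} {g g' : ℝ → ℝ}
    (hg : ContinuousOn g (Icc 0 T))
    (hd : ∀ t ∈ Ioo 0 T, HasDerivAt g (g' t) t)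
    (h0 : g 0 ≤ B)
    (hsign : ∀ t ∈ Ioo 0 T, B < g t → g' t ≤ 0) :
    ∀ t ∈ Icc 0 T, g t ≤ B := by
  intro t₂ ht₂
  by_contra hgt
  push_neg at hgt
  have ht₂0 : 0 < t₂ := by
    rcases eq_or_lt_of_le ht₂.1 with h | h
    · exact absurd h0 (by rw [← h] at hgt; exact not_le.mpr hgt)
    · exact h
  set S : Set ℝ := {t | t ∈ Icc 0 t₂ ∧ g t ≤ B} with hS_def
  have hS0 : (0 : ℝ) ∈ S := ⟨⟨le_rfl, ht₂0.le⟩, h0⟩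
  have hSbdd : BddAbove S := ⟨t₂, fun t ht => ht.1.2⟩
  have hScl : IsClosed S := by
    have : S = Icc 0 t₂ ∩ g ⁻¹' (Iic B) := by
      ext t; simp [hS_def]
    rw [this]
    exact (hg.mono (Icc_subset_Icc_right ht₂.2)).preimage_isClosed_of_isClosed
      isClosed_Icc isClosed_Iic
  set t₁ := sSup S with ht₁_def
  have ht₁S : t₁ ∈ S := hScl.csSup_mem ⟨0, hS0⟩ hSbdd
  have ht₁2 : t₁ < t₂ := by
    rcases eq_or_lt_of_le ht₁S.1.2 with h | h
    · exact absurd (h ▸ ht₁S.2) (not_le.mpr hgt)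
    · exact h
  have hmid : ∀ s ∈ Ioo t₁ t₂, B < g s := by
    intro s hs
    by_contra h
    push_neg at h
    have : s ∈ S := ⟨⟨le_trans ht₁S.1.1 hs.1.le, hs.2.le⟩, h⟩
    exact absurd (le_csSup hSbdd this) (not_le.mpr hs.1)
  have hIooSub : Ioo t₁ t₂ ⊆ Ioo 0 T :=
    fun s hs => ⟨lt_of_le_of_lt ht₁S.1.1 hs.1, lt_of_lt_of_le hs.2 ht₂.2⟩
  have hanti : AntitoneOn g (Icc t₁ t₂) := by
    apply antitoneOn_of_deriv_nonpos (convex_Icc t₁ t₂)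
      (hg.mono (Icc_subset_Icc ht₁S.1.1 ht₂.2))
    · intro s hs
      rw [interior_Icc] at hs
      exact ((hd s (hIooSub hs)).differentiableAt).differentiableWithinAt
    · intro s hs
      rw [interior_Icc] at hs
      rw [(hd s (hIooSub hs)).deriv]
      exact hsign s (hIooSub hs) (hmid s hs)
  have := hanti ⟨le_rfl, ht₁2.le⟩ ⟨ht₁2.le, le_rfl⟩ ht₁2.le
  exact absurd (lt_of_lt_of_le hgt (this.trans ht₁S.2)) (lt_irrefl B)

private noncomputable def myV (α : ℝ) (ω : ℝ → ℝ) (a M : ℝ) (t : ℝ) (y : ℝ × ℝ) : ℝ × ℝ :=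
  (-(myTr M y.2 * myTr a y.1),
    ω t * Real.exp (α * myTr a y.1) * myTr a y.1 - myTr M y.2)

private lemma my_exists (α T a b W : ℝ) (hα : 0 ≤ α) (hT : 0 < T) (ha : 0 ≤ a) (hb : 0 ≤ b)
    (hW0 : 0 ≤ W) (ω : ℝ → ℝ) (hω : ContinuousOn ω (Icc 0 T))
    (hωnn : ∀ t ∈ Icc 0 T, 0 ≤ ω t) (hWle : ∀ t ∈ Icc 0 T, ω t ≤ W) :
    ∃ c p : ℝ → ℝ, ContinuousOn c (Icc 0 T) ∧ ContinuousOn p (Icc 0 T) ∧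
      c 0 = a ∧ p 0 = b ∧
      (∀ t ∈ Ioo 0 T, HasDerivAt c (-(p t) * c t) t) ∧
      (∀ t ∈ Ioo 0 T, HasDerivAt p (ω t * Real.exp (α * c t) * c t - p t) t) ∧
      (∀ t ∈ Icc 0 T, 0 ≤ c t ∧ c t ≤ a) ∧
      (∀ t ∈ Icc 0 T, 0 ≤ p t ∧ p t ≤ max b (a * Real.exp (α * a) * W)) := by
  set M := max b (a * Real.exp (α * a) * W) with hM_def
  have hbM : b ≤ M := le_max_left _ _
  have haM : a * Real.exp (α * a) * W ≤ M := le_max_right _ _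
  have hM0 : 0 ≤ M := hb.trans hbM
  obtain ⟨K, hK⟩ := my_exists_lipOn (my_contDiff_G α)
    ((convex_Icc 0 W).prod ((convex_Icc 0 a).prod (convex_Icc 0 M)))
    (isCompact_Icc.prod (isCompact_Icc.prod isCompact_Icc))
  set C : ℝ := max (M * a) (W * Real.exp (α * a) * a + M) with hC_def
  have hC0 : 0 ≤ C := le_trans (mul_nonneg hM0 ha) (le_max_left _ _)
  have hcl : LipschitzWith 1 (fun y : ℝ × ℝ => ((myTr a y.1, myTr M y.2) : ℝ × ℝ)) := by
    have h1 := (my_clamp_lip a).comp (LipschitzWith.prod_fst (α := ℝ) (β := ℝ))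
    have h2 := (my_clamp_lip M).comp (LipschitzWith.prod_snd (α := ℝ) (β := ℝ))
    simpa using h1.prodMk h2
  have hpl : IsPicardLindelof (myV α ω a M) (tmin := 0) (tmax := T) ⟨0, le_rfl, hT.le⟩
      ((a, b) : ℝ × ℝ) (C * T).toNNReal 0 C.toNNReal K := by
    constructor
    · -- lipschitz
      intro t ht
      have hsl : LipschitzOnWith K (fun y : ℝ × ℝ =>
          ((-(y.2 * y.1), ω t * Real.exp (α * y.1) * y.1 - y.2) : ℝ × ℝ))
          (Icc 0 a ×ˢ Icc 0 M) := my_slice hK ⟨hωnn t ht, hWle t ht⟩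
      have hcomp := hsl.comp (hcl.lipschitzOnWith (s := Set.univ))
        (fun y _ => Set.mk_mem_prod ⟨myTr_nonneg _ _, myTr_le _ _ ha⟩
          ⟨myTr_nonneg _ _, myTr_le _ _ hM0⟩)
      have : LipschitzOnWith (K * 1) (myV α ω a M t) Set.univ := hcomp
      simpa using this.mono (Set.subset_univ _)
    · -- cont
      intro y hy
      show ContinuousOn (fun t => myV α ω a M t y) (Icc 0 T)
      unfold myV
      exact continuousOn_const.prodMk
        (((hω.mul continuousOn_const).mul continuousOn_const).sub continuousOn_const)
    · -- norm_le
      intro t ht y hy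
      rw [Real.coe_toNNReal _ hC0]
      rw [Prod.norm_def]
      apply max_le
      · rw [Real.norm_eq_abs]
        show |(-(myTr M y.2 * myTr a y.1))| ≤ C
        rw [abs_neg, abs_of_nonneg (mul_nonneg (myTr_nonneg _ _) (myTr_nonneg _ _))]
        exact le_trans (mul_le_mul (myTr_le _ _ hM0) (myTr_le _ _ ha)
          (myTr_nonneg _ _) hM0) (le_max_left _ _)
      · rw [Real.norm_eq_abs]
        show |ω t * Real.exp (α * myTr a y.1) * myTr a y.1 - myTr M y.2| ≤ C
        have h1 : ω t * Real.exp (α * myTr a y.1) * myTr a y.1 ≤ W * Real.exp (α * a) * a := by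
          apply mul_le_mul _ (myTr_le _ _ ha) (myTr_nonneg _ _)
            (mul_nonneg hW0 (Real.exp_pos _).le)
          exact mul_le_mul (hWle t ht)
            (Real.exp_le_exp.mpr (mul_le_mul_of_nonneg_left (myTr_le _ _ ha) hα))
            (Real.exp_pos _).le hW0
        have h2 : |ω t * Real.exp (α * myTr a y.1) * myTr a y.1 - myTr M y.2|
            ≤ |ω t * Real.exp (α * myTr a y.1) * myTr a y.1| + |myTr M y.2| := by
          have := norm_sub_le (ω t * Real.exp (α * myTr a y.1) * myTr a y.1) (myTr M y.2)
          simp only [Real.norm_eq_abs] at this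
          exact this
        refine h2.trans (le_trans ?_ (le_max_right _ _))
        rw [abs_of_nonneg (mul_nonneg (mul_nonneg (hωnn t ht) (Real.exp_pos _).le)
          (myTr_nonneg _ _)), abs_of_nonneg (myTr_nonneg _ _)]
        exact add_le_add h1 (myTr_le _ _ hM0)
    · -- C_mul_le_R
      have : max (T - 0) (0 - (0:ℝ)) = T := by
        rw [sub_zero, sub_self]; exact max_eq_left hT.le
      simp only [NNReal.coe_zero, Real.coe_toNNReal _ hC0,
        Real.coe_toNNReal _ (mul_nonneg hC0 hT.le), this, sub_zero, max_eq_left hT.le, le_refl]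
  obtain ⟨f, hf0, hder⟩ := hpl.exists_eq_forall_mem_Icc_hasDerivWithinAt₀
  replace hf0 : f 0 = (a, b) := hf0
  set c : ℝ → ℝ := fun t => (f t).1 with hc_def
  set p : ℝ → ℝ := fun t => (f t).2 with hp_def
  have hfc : ContinuousOn f (Icc 0 T) := fun t ht => (hder t ht).continuousWithinAt
  have hccont : ContinuousOn c (Icc 0 T) := continuous_fst.comp_continuousOn hfc
  have hpcont : ContinuousOn p (Icc 0 T) := continuous_snd.comp_continuousOn hfc
  have hc0 : c 0 = a := by rw [hc_def]; simp [hf0]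
  have hp0 : p 0 = b := by rw [hp_def]; simp [hf0]
  have hdf : ∀ t ∈ Ioo 0 T, HasDerivAt f (myV α ω a M t (f t)) t := fun t ht =>
    (hder t (Ioo_subset_Icc_self ht)).hasDerivAt (Icc_mem_nhds ht.1 ht.2)
  have hdc : ∀ t ∈ Ioo 0 T, HasDerivAt c (-(myTr M (p t) * myTr a (c t))) t := by
    intro t ht
    have := my_fst_deriv (hdf t ht)
    simpa [myV] using this
  have hdp : ∀ t ∈ Ioo 0 T,
      HasDerivAt p (ω t * Real.exp (α * myTr a (c t)) * myTr a (c t) - myTr M (p t)) t := by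
    intro t ht
    have := my_snd_deriv (hdf t ht)
    simpa [myV] using this
  -- bounds
  have hcub : ∀ t ∈ Icc 0 T, c t ≤ a := by
    apply my_barrier hccont hdc (le_of_eq hc0)
    intro t ht _
    exact neg_nonpos.mpr (mul_nonneg (myTr_nonneg _ _) (myTr_nonneg _ _))
  have hclb : ∀ t ∈ Icc 0 T, 0 ≤ c t := by
    have := my_barrier (B := 0) (g := fun t => -(c t))
      (g' := fun t => myTr M (p t) * myTr a (c t))
      (hccont.neg) (fun t ht => by have h := (hdc t ht).neg; rw [neg_neg] at h; exact h)
      (by simp [hc0, ha])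
      (fun t ht hneg => by
        have hcneg : c t < 0 := by simpa using hneg
        show myTr M (p t) * myTr a (c t) ≤ 0
        rw [myTr_eq_zero a (c t) hcneg.le ha, mul_zero])
    intro t ht
    have h := this t ht
    linarith
  have hplb : ∀ t ∈ Icc 0 T, 0 ≤ p t := by
    have := my_barrier (B := 0) (g := fun t => -(p t))
      (g' := fun t => -(ω t * Real.exp (α * myTr a (c t)) * myTr a (c t) - myTr M (p t)))
      (hpcont.neg) (fun t ht => (hdp t ht).neg)
      (by simp [hp0, hb])
      (fun t ht hneg => by
        have hpneg : p t < 0 := by simpa using hneg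
        show -(ω t * Real.exp (α * myTr a (c t)) * myTr a (c t) - myTr M (p t)) ≤ 0
        rw [myTr_eq_zero M (p t) hpneg.le hM0]
        have : 0 ≤ ω t * Real.exp (α * myTr a (c t)) * myTr a (c t) :=
          mul_nonneg (mul_nonneg (hωnn t (Ioo_subset_Icc_self ht)) (Real.exp_pos _).le)
            (myTr_nonneg _ _)
        linarith)
    intro t ht
    have h := this t ht
    linarith
  have hpub : ∀ t ∈ Icc 0 T, p t ≤ M := by
    apply my_barrier hpcont hdp (hp0.le.trans hbM)
    intro t ht hgt
    rw [myTr_eq_top M (p t) hgt.le hM0]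
    have h1 : ω t * Real.exp (α * myTr a (c t)) * myTr a (c t) ≤ W * Real.exp (α * a) * a := by
      apply mul_le_mul _ (myTr_le _ _ ha) (myTr_nonneg _ _)
        (mul_nonneg hW0 (Real.exp_pos _).le)
      exact mul_le_mul (hWle t (Ioo_subset_Icc_self ht))
        (Real.exp_le_exp.mpr (mul_le_mul_of_nonneg_left (myTr_le _ _ ha) hα))
        (Real.exp_pos _).le hW0
    have h2 : W * Real.exp (α * a) * a ≤ M := by
      calc W * Real.exp (α * a) * a = a * Real.exp (α * a) * W := by ring
      _ ≤ M := haM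
    linarith
  -- convert derivatives
  refine ⟨c, p, hccont, hpcont, hc0, hp0, ?_, ?_, fun t ht => ⟨hclb t ht, hcub t ht⟩,
    fun t ht => ⟨hplb t ht, hpub t ht⟩⟩
  · intro t ht
    have h := hdc t ht
    have e1 : myTr a (c t) = c t :=
      myTr_eq _ _ (hclb t (Ioo_subset_Icc_self ht)) (hcub t (Ioo_subset_Icc_self ht))
    have e2 : myTr M (p t) = p t :=
      myTr_eq _ _ (hplb t (Ioo_subset_Icc_self ht)) (hpub t (Ioo_subset_Icc_self ht))
    rw [e1, e2, ← neg_mul] at h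
    exact h
  · intro t ht
    have h := hdp t ht
    have e1 : myTr a (c t) = c t :=
      myTr_eq _ _ (hclb t (Ioo_subset_Icc_self ht)) (hcub t (Ioo_subset_Icc_self ht))
    have e2 : myTr M (p t) = p t :=
      myTr_eq _ _ (hplb t (Ioo_subset_Icc_self ht)) (hpub t (Ioo_subset_Icc_self ht))
    rw [e1, e2] at h
    exact h

private noncomputable def myU (α : ℝ) (ω : ℝ → ℝ) (T : ℝ) (t : ℝ) (y : ℝ × ℝ) : ℝ × ℝ :=
  (-(y.2 * y.1), ω (min (max t 0) T) * Real.exp (α * y.1) * y.1 - y.2)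

private lemma my_unique (α T W : ℝ) (hT : 0 < T)
    (ω : ℝ → ℝ) (hWle : ∀ t ∈ Icc 0 T, |ω t| ≤ W)
    (c p c' p' : ℝ → ℝ)
    (hc : ContinuousOn c (Icc 0 T)) (hp : ContinuousOn p (Icc 0 T))
    (hc' : ContinuousOn c' (Icc 0 T)) (hp' : ContinuousOn p' (Icc 0 T))
    (h0c : c 0 = c' 0) (h0p : p 0 = p' 0)
    (hdc : ∀ t ∈ Ioo 0 T, HasDerivAt c (-(p t) * c t) t)
    (hdp : ∀ t ∈ Ioo 0 T, HasDerivAt p (ω t * Real.exp (α * c t) * c t - p t) t)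
    (hdc' : ∀ t ∈ Ioo 0 T, HasDerivAt c' (-(p' t) * c' t) t)
    (hdp' : ∀ t ∈ Ioo 0 T, HasDerivAt p' (ω t * Real.exp (α * c' t) * c' t - p' t) t) :
    ∀ t ∈ Icc 0 T, c t = c' t ∧ p t = p' t := by
  have h0mem : (0 : ℝ) ∈ Icc 0 T := ⟨le_rfl, hT.le⟩
  have hfc : ContinuousOn (fun t => ((c t, p t) : ℝ × ℝ)) (Icc 0 T) := hc.prodMk hp
  have hgc : ContinuousOn (fun t => ((c' t, p' t) : ℝ × ℝ)) (Icc 0 T) := hc'.prodMk hp'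
  obtain ⟨r₁, hr₁⟩ := ((isCompact_Icc.image_of_continuousOn hfc).isBounded).subset_closedBall
    (0 : ℝ × ℝ)
  obtain ⟨r₂, hr₂⟩ := ((isCompact_Icc.image_of_continuousOn hgc).isBounded).subset_closedBall
    (0 : ℝ × ℝ)
  set r := max r₁ r₂ with hr_def
  have hmemf : ∀ t ∈ Icc 0 T, ((c t, p t) : ℝ × ℝ) ∈ Metric.closedBall (0 : ℝ × ℝ) r :=
    fun t ht => Metric.closedBall_subset_closedBall (le_max_left _ _)
      (hr₁ (mem_image_of_mem _ ht))
  have hmemg : ∀ t ∈ Icc 0 T, ((c' t, p' t) : ℝ × ℝ) ∈ Metric.closedBall (0 : ℝ × ℝ) r :=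
    fun t ht => Metric.closedBall_subset_closedBall (le_max_right _ _)
      (hr₂ (mem_image_of_mem _ ht))
  obtain ⟨K, hK⟩ := my_exists_lipOn (my_contDiff_G α)
    ((convex_Icc (-W) W).prod (convex_closedBall _ _))
    (isCompact_Icc.prod (isCompact_closedBall _ _))
  have hv : ∀ t, LipschitzOnWith K (myU α ω T t) (Metric.closedBall (0 : ℝ × ℝ) r) := by
    intro t
    have hproj : min (max t 0) T ∈ Icc 0 T :=
      ⟨le_min (le_max_right t 0) hT.le, min_le_right _ _⟩
    have hmem : ω (min (max t 0) T) ∈ Icc (-W) W := by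
      have := abs_le.mp (hWle _ hproj)
      exact ⟨this.1, this.2⟩
    exact my_slice hK hmem
  have hsolf : ∀ s ∈ Ioo 0 T,
      HasDerivAt (fun t => ((c t, p t) : ℝ × ℝ)) (myU α ω T s (c s, p s)) s := by
    intro s hs
    have h1 := (hdc s hs).prodMk (hdp s hs)
    have hproj : min (max s 0) T = s := by rw [max_eq_left hs.1.le, min_eq_left hs.2.le]
    simpa [myU, hproj, neg_mul] using h1
  have hsolg : ∀ s ∈ Ioo 0 T,
      HasDerivAt (fun t => ((c' t, p' t) : ℝ × ℝ)) (myU α ω T s (c' s, p' s)) s := by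
    intro s hs
    have h1 := (hdc' s hs).prodMk (hdp' s hs)
    have hproj : min (max s 0) T = s := by rw [max_eq_left hs.1.le, min_eq_left hs.2.le]
    simpa [myU, hproj, neg_mul] using h1
  intro t ht
  rcases eq_or_lt_of_le ht.1 with h0t | h0t
  · exact ⟨h0t ▸ h0c, h0t ▸ h0p⟩
  -- t ∈ Ioc 0 T
  have key : ∀ ε > 0, dist ((c t, p t) : ℝ × ℝ) ((c' t, p' t) : ℝ × ℝ) < ε := by
    intro ε hε
    set Eb := Real.exp ((K : ℝ) * T) with hEb_def
    have hEb : 0 < Eb := Real.exp_pos _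
    have hcw : ContinuousWithinAt
        (fun s => dist ((c s, p s) : ℝ × ℝ) ((c' s, p' s) : ℝ × ℝ)) (Icc 0 T) 0 :=
      Filter.Tendsto.dist (hfc 0 h0mem) (hgc 0 h0mem)
    rw [Metric.continuousWithinAt_iff] at hcw
    obtain ⟨δ, hδ0, hδ⟩ := hcw (ε / Eb) (div_pos hε hEb)
    set a' := min (δ / 2) (t / 2) with ha'_def
    have ha'0 : 0 < a' := lt_min (half_pos hδ0) (half_pos h0t)
    have ha't : a' < t := lt_of_le_of_lt (min_le_right _ _) (half_lt_self h0t)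
    have ha'mem : a' ∈ Icc (0:ℝ) T := ⟨ha'0.le, le_trans ha't.le ht.2⟩
    have hsmall := hδ ha'mem (by
      rw [Real.dist_eq, sub_zero, abs_of_pos ha'0]
      exact lt_of_le_of_lt (min_le_left _ _) (half_lt_self hδ0))
    have hD0 : dist ((c 0, p 0) : ℝ × ℝ) ((c' 0, p' 0) : ℝ × ℝ) = 0 := by
      rw [dist_eq_zero]; exact Prod.ext h0c h0p
    rw [hD0, Real.dist_eq, sub_zero, abs_of_nonneg dist_nonneg] at hsmall
    -- Gronwall on [a', t]
    have happ := dist_le_of_trajectories_ODE_of_mem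
      (v := myU α ω T) (s := fun _ => Metric.closedBall (0 : ℝ × ℝ) r) (K := K)
      (fun τ _ => hv τ)
      (hfc.mono (Icc_subset_Icc ha'0.le ht.2))
      (fun s hs => (hsolf s ⟨lt_of_lt_of_le ha'0 hs.1, lt_of_lt_of_le hs.2 ht.2⟩).hasDerivWithinAt)
      (fun s hs => hmemf s ⟨le_trans ha'0.le hs.1, le_trans hs.2.le ht.2⟩)
      (hgc.mono (Icc_subset_Icc ha'0.le ht.2))
      (fun s hs => (hsolg s ⟨lt_of_lt_of_le ha'0 hs.1, lt_of_lt_of_le hs.2 ht.2⟩).hasDerivWithinAt)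
      (fun s hs => hmemg s ⟨le_trans ha'0.le hs.1, le_trans hs.2.le ht.2⟩)
      (le_refl (dist ((c a', p a') : ℝ × ℝ) ((c' a', p' a') : ℝ × ℝ)))
      t ⟨ha't.le, le_rfl⟩
    have hexp : Real.exp ((K : ℝ) * (t - a')) ≤ Eb := by
      rw [hEb_def]
      exact Real.exp_le_exp.mpr (mul_le_mul_of_nonneg_left (by linarith [ht.2]) K.coe_nonneg)
    calc dist ((c t, p t) : ℝ × ℝ) ((c' t, p' t) : ℝ × ℝ)
        ≤ dist ((c a', p a') : ℝ × ℝ) ((c' a', p' a') : ℝ × ℝ)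
          * Real.exp ((K : ℝ) * (t - a')) := happ
      _ ≤ dist ((c a', p a') : ℝ × ℝ) ((c' a', p' a') : ℝ × ℝ) * Eb :=
          mul_le_mul_of_nonneg_left hexp dist_nonneg
      _ < (ε / Eb) * Eb := mul_lt_mul_of_pos_right hsmall hEb
      _ = ε := div_mul_cancel₀ ε hEb.ne'
  have hdist0 : dist ((c t, p t) : ℝ × ℝ) ((c' t, p' t) : ℝ × ℝ) = 0 := by
    by_contra h
    have hpos : 0 < dist ((c t, p t) : ℝ × ℝ) ((c' t, p' t) : ℝ × ℝ) :=
      lt_of_le_of_ne dist_nonneg (Ne.symm h)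
    exact absurd (key _ hpos) (lt_irrefl _)
  have := dist_eq_zero.mp hdist0
  exact ⟨congrArg Prod.fst this, congrArg Prod.snd this⟩

/-- Lemma 2.3(a): for each `x ∈ Ω̄` the system
`cₜ = −pc`, `pₜ = w e^{αc} c − p` with nonnegative data has a unique global
solution on `[0,T]`, satisfying `0 ≤ c ≤ c₀(x)` and
`0 ≤ p ≤ max {p₀(x), c₀(x) e^{αc₀(x)} max_s w(x,s)}`. -/
theorem stmt15 {n : ℕ} (Ω : Set (EuclideanSpace ℝ (Fin n)))
    (hΩ : Bornology.IsBounded Ω) (α T : ℝ) (hα : 0 ≤ α) (hT : 0 < T)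
    (w : EuclideanSpace ℝ (Fin n) → ℝ → ℝ)
    (hwcont : ContinuousOn (fun q : EuclideanSpace ℝ (Fin n) × ℝ => w q.1 q.2)
      (closure Ω ×ˢ Icc 0 T))
    (hwnn : ∀ x ∈ closure Ω, ∀ t ∈ Icc 0 T, 0 ≤ w x t)
    (c₀ p₀ : EuclideanSpace ℝ (Fin n) → ℝ)
    (hc₀ : ContinuousOn c₀ (closure Ω)) (hp₀ : ContinuousOn p₀ (closure Ω))
    (hc₀nn : ∀ x ∈ closure Ω, 0 ≤ c₀ x) (hp₀nn : ∀ x ∈ closure Ω, 0 ≤ p₀ x) :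
    ∀ x ∈ closure Ω, ∃ c p : ℝ → ℝ,
      (ContinuousOn c (Icc 0 T) ∧ ContinuousOn p (Icc 0 T)) ∧
      c 0 = c₀ x ∧ p 0 = p₀ x ∧
      (∀ t ∈ Ioo 0 T, HasDerivAt c (-(p t) * c t) t) ∧
      (∀ t ∈ Ioo 0 T,
        HasDerivAt p (w x t * Real.exp (α * c t) * c t - p t) t) ∧
      (∀ t ∈ Icc 0 T, 0 ≤ c t ∧ c t ≤ c₀ x) ∧
      (∀ t ∈ Icc 0 T, 0 ≤ p t ∧
        p t ≤ max (p₀ x) (c₀ x * Real.exp (α * c₀ x)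
          * sSup ((fun s => w x s) '' Icc 0 T))) ∧
      -- uniqueness
      (∀ c' p' : ℝ → ℝ,
        ContinuousOn c' (Icc 0 T) → ContinuousOn p' (Icc 0 T) →
        c' 0 = c₀ x → p' 0 = p₀ x →
        (∀ t ∈ Ioo 0 T, HasDerivAt c' (-(p' t) * c' t) t) →
        (∀ t ∈ Ioo 0 T,
          HasDerivAt p' (w x t * Real.exp (α * c' t) * c' t - p' t) t) →
        ∀ t ∈ Icc 0 T, c' t = c t ∧ p' t = p t) := by
  intro x hx
  have hwx : ContinuousOn (fun t => w x t) (Icc 0 T) := by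
    have hmk : Continuous (fun t : ℝ => ((x, t) : EuclideanSpace ℝ (Fin n) × ℝ)) :=
      continuous_const.prodMk continuous_id
    exact hwcont.comp hmk.continuousOn (fun t ht => ⟨hx, ht⟩)
  have h0T : (0 : ℝ) ∈ Icc 0 T := ⟨le_rfl, hT.le⟩
  set W := sSup ((fun s => w x s) '' Icc 0 T) with hW_def
  have hbdd : BddAbove ((fun s => w x s) '' Icc 0 T) :=
    (isCompact_Icc.image_of_continuousOn hwx).bddAbove
  have hWle : ∀ t ∈ Icc (0 : ℝ) T, w x t ≤ W := fun t ht =>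
    le_csSup hbdd (mem_image_of_mem _ ht)
  have hW0 : 0 ≤ W := le_trans (hwnn x hx 0 h0T) (hWle 0 h0T)
  obtain ⟨c, p, hccont, hpcont, hc0, hp0, hdc, hdp, hcb, hpb⟩ :=
    my_exists α T (c₀ x) (p₀ x) W hα hT (hc₀nn x hx) (hp₀nn x hx) hW0 _ hwx
      (fun t ht => hwnn x hx t ht) hWle
  refine ⟨c, p, ⟨hccont, hpcont⟩, hc0, hp0, hdc, hdp, hcb, hpb, ?_⟩
  intro c' p' hc' hp' hc'0 hp'0 hdc' hdp'
  exact my_unique α T W hT (fun t => w x t)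
    (fun t ht => by rw [abs_of_nonneg (hwnn x hx t ht)]; exact hWle t ht)
    c' p' c p hc' hp' hccont hpcont (hc'0.trans hc0.symm) (hp'0.trans hp0.symm)
    hdc' hdp' hdc hdp
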